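/- Let γ > 2, λ > 2, T_M > 1, fix 0 < S_min ≤ S_max < 1, let (Ω, μ) be a finite measure space, and let C₀ > 0. There exists C' > 0, depending only on γ, λ, T_M, S_min, S_max, μ(Ω) and C₀, such that for every ε ∈ (0, 1/4], every S_D ∈ [S_min, S_max], and every measurable function S : Ω → ℝ with ∫_Ω E_ε(S(x)) dμ(x) ≤ C₀, one has ∫_Ω Z_ε(S(x))^{2-γ} dμ(x) ≤ C' and ∫_Ω (1 − Z_ε(S(x)))^{2-λ} dμ(x) ≤ C'. -/
import Mathlib


open MeasureTheory

/-- The cutting function `Z(s) = min(max(s,0),1)`. -/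
noncomputable def Z (s : ℝ) : ℝ := min (max s 0) 1

/-- The regularized cutting function `Z_ε(s) = (1−2ε)Z(s) + ε`. -/
noncomputable def Zeps (ε s : ℝ) : ℝ := (1 - 2 * ε) * Z s + ε

/-- The integrand `h_ε(ξ) = Z_ε(ξ)^{-γ} + T_M (1 − Z_ε(ξ))^{-λ}` of the regularized entropy. -/
noncomputable def heps (γ lam TM ε ξ : ℝ) : ℝ :=
  Zeps ε ξ ^ (-γ) + TM * (1 - Zeps ε ξ) ^ (-lam)

/-- The regularized entropy with base point `S_D`. -/
noncomputable def Eeps (γ lam TM ε SD s : ℝ) : ℝ :=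
  s * (∫ ξ in SD..s, heps γ lam TM ε ξ) - ∫ ξ in SD..s, ξ * heps γ lam TM ε ξ

section Aux

variable {γ lam TM ε SD s : ℝ}

lemma Z_nonneg (s : ℝ) : 0 ≤ Z s := le_min (le_max_right _ _) one_pos.le

lemma Z_le_one (s : ℝ) : Z s ≤ 1 := min_le_right _ _

lemma Z_mono {a b : ℝ} (h : a ≤ b) : Z a ≤ Z b :=
  min_le_min (max_le_max h le_rfl) le_rfl

lemma Z_lip {a b : ℝ} (h : a ≤ b) : Z b - Z a ≤ b - a := by
  simp only [Z, min_def, max_def]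
  split_ifs <;> linarith

lemma Zeps_pos (hε : 0 < ε) (hε4 : ε ≤ 1/4) (s : ℝ) : 0 < Zeps ε s := by
  have h1 := Z_nonneg s
  unfold Zeps; nlinarith

lemma Zeps_lt_one (hε : 0 < ε) (hε4 : ε ≤ 1/4) (s : ℝ) : Zeps ε s < 1 := by
  have h1 := Z_le_one s
  unfold Zeps; nlinarith

lemma Zeps_mono (hε4 : ε ≤ 1/4) {a b : ℝ} (h : a ≤ b) : Zeps ε a ≤ Zeps ε b := by
  have := Z_mono (h := h)
  unfold Zeps; nlinarith

lemma Zeps_lip (hε : 0 < ε) {a b : ℝ} (h : a ≤ b) : Zeps ε b - Zeps ε a ≤ b - a := by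
  have h1 := Z_lip h
  have h2 := Z_mono (h := h)
  unfold Zeps; nlinarith

lemma Zeps_cont (ε : ℝ) : Continuous (Zeps ε) := by
  unfold Zeps Z; fun_prop

lemma heps_cont (hε : 0 < ε) (hε4 : ε ≤ 1/4) :
    Continuous (heps γ lam TM ε) := by
  unfold heps
  refine Continuous.add ?_ (continuous_const.mul ?_)
  · exact (Zeps_cont ε).rpow_const fun x => Or.inl (Zeps_pos hε hε4 x).ne'
  · exact (continuous_const.sub (Zeps_cont ε)).rpow_const
      fun x => Or.inl (by have := Zeps_lt_one hε hε4 x; intro h; linarith [sub_eq_zero.mp h])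

lemma heps_nonneg (hε : 0 < ε) (hε4 : ε ≤ 1/4) (hTM : 0 ≤ TM) (ξ : ℝ) :
    0 ≤ heps γ lam TM ε ξ :=
  add_nonneg (Real.rpow_nonneg (Zeps_pos hε hε4 ξ).le _)
    (mul_nonneg hTM (Real.rpow_nonneg (by linarith [Zeps_lt_one hε hε4 ξ]) _))

lemma left_le_heps (hε : 0 < ε) (hε4 : ε ≤ 1/4) (hTM : 0 ≤ TM) (ξ : ℝ) :
    Zeps ε ξ ^ (-γ) ≤ heps γ lam TM ε ξ :=
  le_add_of_nonneg_right
    (mul_nonneg hTM (Real.rpow_nonneg (by linarith [Zeps_lt_one hε hε4 ξ]) _))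

lemma right_le_heps (hε : 0 < ε) (hε4 : ε ≤ 1/4) (hTM : 1 ≤ TM) (ξ : ℝ) :
    (1 - Zeps ε ξ) ^ (-lam) ≤ heps γ lam TM ε ξ := by
  unfold heps
  have h1 : (0:ℝ) ≤ Zeps ε ξ ^ (-γ) := Real.rpow_nonneg (Zeps_pos hε hε4 ξ).le _
  have h2 : (0:ℝ) ≤ (1 - Zeps ε ξ) ^ (-lam) :=
    Real.rpow_nonneg (by linarith [Zeps_lt_one hε hε4 ξ]) _
  nlinarith

/-- The entropy as a single interval integral. -/
lemma Eeps_eq (hε : 0 < ε) (hε4 : ε ≤ 1/4) (SD s : ℝ) :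
    Eeps γ lam TM ε SD s = ∫ ξ in SD..s, (s - ξ) * heps γ lam TM ε ξ := by
  have hc := heps_cont (γ := γ) (lam := lam) (TM := TM) hε hε4
  have h1 : IntervalIntegrable (heps γ lam TM ε) volume SD s :=
    hc.intervalIntegrable SD s
  have h2 : IntervalIntegrable (fun ξ => ξ * heps γ lam TM ε ξ) volume SD s :=
    (continuous_id.mul hc).intervalIntegrable SD s
  unfold Eeps
  rw [← intervalIntegral.integral_const_mul, ← intervalIntegral.integral_sub (h1.const_mul s) h2]
  exact intervalIntegral.integral_congr fun ξ _ => by ring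

lemma Eeps_nonneg (hε : 0 < ε) (hε4 : ε ≤ 1/4) (hTM : 0 ≤ TM) (SD s : ℝ) :
    0 ≤ Eeps γ lam TM ε SD s := by
  rw [Eeps_eq hε hε4]
  rcases le_total SD s with h | h
  · exact intervalIntegral.integral_nonneg h fun u hu =>
      mul_nonneg (by linarith [hu.2]) (heps_nonneg hε hε4 hTM u)
  · rw [intervalIntegral.integral_symm]
    have h' : (0:ℝ) ≤ ∫ ξ in s..SD, (ξ - s) * heps γ lam TM ε ξ :=
      intervalIntegral.integral_nonneg h fun u hu =>
        mul_nonneg (by linarith [hu.1]) (heps_nonneg hε hε4 hTM u)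
    have he : (∫ ξ in s..SD, (s - ξ) * heps γ lam TM ε ξ)
        = - ∫ ξ in s..SD, (ξ - s) * heps γ lam TM ε ξ := by
      rw [← intervalIntegral.integral_neg]
      exact intervalIntegral.integral_congr fun ξ _ => by ring

    linarith

/-- Triangle-integral computation. -/
lemma tri_integral (s r c : ℝ) :
    ∫ ξ in s..s + r, (ξ - s) * c = r ^ 2 / 2 * c := by
  rw [intervalIntegral.integral_mul_const,
    intervalIntegral.integral_sub (Continuous.intervalIntegrable (by fun_prop) _ _)
      (intervalIntegrable_const), integral_id, intervalIntegral.integral_const]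
  simp only [smul_eq_mul]
  ring

lemma tri_integral' (s r c : ℝ) :
    ∫ ξ in s - r..s, (s - ξ) * c = r ^ 2 / 2 * c := by
  rw [intervalIntegral.integral_mul_const,
    intervalIntegral.integral_sub intervalIntegrable_const
      (Continuous.intervalIntegrable (by fun_prop) _ _),
    integral_id, intervalIntegral.integral_const]
  simp only [smul_eq_mul]
  ring

lemma pow_alg {z p : ℝ} (hz : 0 < z) :
    (2:ℝ) ^ (-p - 1) * z ^ (2 - p) = z ^ 2 / 2 * (2 * z) ^ (-p) := by
  rw [Real.mul_rpow (by norm_num) hz.le]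
  have e1 : z ^ (2 - p) = z ^ (2:ℝ) * z ^ (-p) := by
    rw [← Real.rpow_add hz]; ring_nf
  have e2 : (2:ℝ) ^ (-p - 1) = 2 ^ (-p) / 2 := by
    rw [show -p - 1 = -p + (-1) by ring, Real.rpow_add (by norm_num : (0:ℝ) < 2),
      Real.rpow_neg_one]
    ring
  rw [e1, e2, Real.rpow_two]
  ring

/-- Key lower bound on the left side. -/
lemma lowerA (hε : 0 < ε) (hε4 : ε ≤ 1/4) (hTM : 0 ≤ TM) (hγ : 2 < γ)
    (h : s + Zeps ε s ≤ SD) :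
    (2:ℝ) ^ (-γ - 1) * Zeps ε s ^ (2 - γ) ≤ Eeps γ lam TM ε SD s := by
  set z := Zeps ε s with hzdef
  have hz : 0 < z := Zeps_pos hε hε4 s
  have hc := heps_cont (γ := γ) (lam := lam) (TM := TM) hε hε4
  have hii : ∀ a b : ℝ, IntervalIntegrable (fun ξ => (ξ - s) * heps γ lam TM ε ξ) volume a b :=
    fun a b => (Continuous.mul (by fun_prop) hc).intervalIntegrable a b
  have hss : s ≤ SD := by linarith
  rw [Eeps_eq hε hε4, intervalIntegral.integral_symm]
  have he : (∫ ξ in s..SD, (s - ξ) * heps γ lam TM ε ξ)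
      = - ∫ ξ in s..SD, (ξ - s) * heps γ lam TM ε ξ := by
    rw [← intervalIntegral.integral_neg]
    exact intervalIntegral.integral_congr fun ξ _ => by ring
  rw [he, neg_neg]
  have hsplit : (∫ ξ in s..s + z, (ξ - s) * heps γ lam TM ε ξ)
      + ∫ ξ in s + z..SD, (ξ - s) * heps γ lam TM ε ξ
      = ∫ ξ in s..SD, (ξ - s) * heps γ lam TM ε ξ :=
    intervalIntegral.integral_add_adjacent_intervals (hii _ _) (hii _ _)
  have htail : (0:ℝ) ≤ ∫ ξ in s + z..SD, (ξ - s) * heps γ lam TM ε ξ :=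
    intervalIntegral.integral_nonneg h fun u hu =>
      mul_nonneg (by linarith [hu.1]) (heps_nonneg hε hε4 hTM u)
  have hmain : (2:ℝ) ^ (-γ - 1) * z ^ (2 - γ)
      ≤ ∫ ξ in s..s + z, (ξ - s) * heps γ lam TM ε ξ := by
    have hstep : ∀ ξ ∈ Set.Icc s (s + z),
        (ξ - s) * (2 * z) ^ (-γ) ≤ (ξ - s) * heps γ lam TM ε ξ := by
      intro ξ hξ
      refine mul_le_mul_of_nonneg_left ?_ (by linarith [hξ.1])
      have hle : Zeps ε ξ ≤ 2 * z := by
        have := Zeps_lip hε hξ.1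
        have := hξ.2
        linarith
      calc (2 * z) ^ (-γ) ≤ Zeps ε ξ ^ (-γ) :=
            Real.rpow_le_rpow_of_nonpos (Zeps_pos hε hε4 ξ) hle (by linarith)
        _ ≤ heps γ lam TM ε ξ := left_le_heps hε hε4 hTM ξ
    have hmono := intervalIntegral.integral_mono_on (by linarith : s ≤ s + z)
      (Continuous.intervalIntegrable (by fun_prop) _ _) (hii _ _) hstep
    have hcomp : (∫ ξ in s..s + z, (ξ - s) * (2 * z) ^ (-γ))
        = z ^ 2 / 2 * (2 * z) ^ (-γ) := tri_integral s z _
    have hkey := pow_alg (p := γ) hz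
    linarith
  linarith

/-- Key lower bound on the right side. -/
lemma lowerB (hε : 0 < ε) (hε4 : ε ≤ 1/4) (hTM : 1 ≤ TM) (hlam : 2 < lam)
    (h : SD ≤ s - (1 - Zeps ε s)) :
    (2:ℝ) ^ (-lam - 1) * (1 - Zeps ε s) ^ (2 - lam) ≤ Eeps γ lam TM ε SD s := by
  set w := 1 - Zeps ε s with hwdef
  have hw : 0 < w := by have := Zeps_lt_one hε hε4 s; simp [hwdef]; linarith
  have hc := heps_cont (γ := γ) (lam := lam) (TM := TM) hε hε4
  have hii : ∀ a b : ℝ, IntervalIntegrable (fun ξ => (s - ξ) * heps γ lam TM ε ξ) volume a b :=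
    fun a b => (Continuous.mul (by fun_prop) hc).intervalIntegrable a b
  rw [Eeps_eq hε hε4]
  have hsplit : (∫ ξ in SD..s - w, (s - ξ) * heps γ lam TM ε ξ)
      + ∫ ξ in s - w..s, (s - ξ) * heps γ lam TM ε ξ
      = ∫ ξ in SD..s, (s - ξ) * heps γ lam TM ε ξ :=
    intervalIntegral.integral_add_adjacent_intervals (hii _ _) (hii _ _)
  have hhead : (0:ℝ) ≤ ∫ ξ in SD..s - w, (s - ξ) * heps γ lam TM ε ξ :=
    intervalIntegral.integral_nonneg h fun u hu =>
      mul_nonneg (by linarith [hu.2]) (heps_nonneg hε hε4 (by linarith) u)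
  have hmain : (2:ℝ) ^ (-lam - 1) * w ^ (2 - lam)
      ≤ ∫ ξ in s - w..s, (s - ξ) * heps γ lam TM ε ξ := by
    have hstep : ∀ ξ ∈ Set.Icc (s - w) s,
        (s - ξ) * (2 * w) ^ (-lam) ≤ (s - ξ) * heps γ lam TM ε ξ := by
      intro ξ hξ
      refine mul_le_mul_of_nonneg_left ?_ (by linarith [hξ.2])
      have hlt1 := Zeps_lt_one hε hε4 ξ
      have hlip := Zeps_lip hε hξ.2
      have hle : 1 - Zeps ε ξ ≤ 2 * w := by
        have h1 := hξ.1
        simp only [hwdef]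
        linarith
      calc (2 * w) ^ (-lam) ≤ (1 - Zeps ε ξ) ^ (-lam) :=
            Real.rpow_le_rpow_of_nonpos (by linarith) hle (by linarith)
        _ ≤ heps γ lam TM ε ξ := right_le_heps hε hε4 hTM ξ
    have hmono := intervalIntegral.integral_mono_on (by linarith : s - w ≤ s)
      (Continuous.intervalIntegrable (by fun_prop) _ _) (hii _ _) hstep
    have hcomp := tri_integral' s w ((2 * w) ^ (-lam))
    have hkey := pow_alg (p := lam) hw
    linarith
  linarith

/-- Pointwise bound, left singularity. -/
lemma pointwiseA {Smin : ℝ} (hε : 0 < ε) (hε4 : ε ≤ 1/4) (hTM : 0 ≤ TM) (hγ : 2 < γ)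
    (hSmin : 0 < Smin) (hSminlt : Smin < 1) (hSD1 : Smin ≤ SD) (s : ℝ) :
    Zeps ε s ^ (2 - γ) ≤ 2 ^ (γ + 1) * Eeps γ lam TM ε SD s + (Smin / 4) ^ (2 - γ) := by
  have hE := Eeps_nonneg (γ := γ) (lam := lam) hε hε4 hTM SD s
  have hz := Zeps_pos hε hε4 s
  have h2p : (0:ℝ) ≤ (2:ℝ) ^ (γ + 1) := (Real.rpow_pos_of_pos two_pos _).le
  have hbnonneg : (0:ℝ) ≤ (Smin / 4) ^ (2 - γ) := Real.rpow_nonneg (by positivity) _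
  rcases le_or_gt (Smin / 4) (Zeps ε s) with hcase | hcase
  · have hb : Zeps ε s ^ (2 - γ) ≤ (Smin / 4) ^ (2 - γ) :=
      Real.rpow_le_rpow_of_nonpos (by positivity) hcase (by linarith)
    nlinarith [mul_nonneg h2p hE]
  · have hin : s + Zeps ε s ≤ SD := by
      by_contra hc
      push_neg at hc
      have hs1 : 3 * Smin / 4 < s := by linarith
      rcases le_or_gt 1 s with hge | hlt
      · have hZ : Z s = 1 := by
          unfold Z; rw [max_eq_left (by linarith), min_eq_right hge]
        have hzz : Zeps ε s = 1 - ε := by unfold Zeps; rw [hZ]; ring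
        rw [hzz] at hcase; linarith
      · have hZ : Z s = s := by
          unfold Z; rw [max_eq_left (by linarith), min_eq_left hlt.le]
        have hzz : Zeps ε s = (1 - 2 * ε) * s + ε := by unfold Zeps; rw [hZ]
        rw [hzz] at hcase
        nlinarith [mul_nonneg (by linarith : (0:ℝ) ≤ 1/2 - 2 * ε) (by linarith : (0:ℝ) ≤ s)]
    have hlow := lowerA (lam := lam) (TM := TM) hε hε4 hTM hγ hin
    have hpow : (2:ℝ) ^ (γ + 1) * 2 ^ (-γ - 1) = 1 := by
      rw [← Real.rpow_add (by norm_num : (0:ℝ) < 2)]; norm_num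
    calc Zeps ε s ^ (2 - γ) = 2 ^ (γ + 1) * (2 ^ (-γ - 1) * Zeps ε s ^ (2 - γ)) := by
          rw [← mul_assoc, hpow, one_mul]
      _ ≤ 2 ^ (γ + 1) * Eeps γ lam TM ε SD s := mul_le_mul_of_nonneg_left hlow h2p
      _ ≤ _ := le_add_of_nonneg_right hbnonneg

/-- Pointwise bound, right singularity. -/
lemma pointwiseB {Smax : ℝ} (hε : 0 < ε) (hε4 : ε ≤ 1/4) (hTM : 1 ≤ TM) (hlam : 2 < lam)
    (hSmax0 : 0 < Smax) (hSmaxlt : Smax < 1) (hSD2 : SD ≤ Smax) (s : ℝ) :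
    (1 - Zeps ε s) ^ (2 - lam)
      ≤ 2 ^ (lam + 1) * Eeps γ lam TM ε SD s + ((1 - Smax) / 4) ^ (2 - lam) := by
  have hE := Eeps_nonneg (γ := γ) (lam := lam) (TM := TM) hε hε4 (by linarith) SD s
  have hw : 0 < 1 - Zeps ε s := by linarith [Zeps_lt_one hε hε4 s]
  have h2p : (0:ℝ) ≤ (2:ℝ) ^ (lam + 1) := (Real.rpow_pos_of_pos two_pos _).le
  have hbnonneg : (0:ℝ) ≤ ((1 - Smax) / 4) ^ (2 - lam) :=
    Real.rpow_nonneg (x := (1 - Smax) / 4) (by linarith [hSmaxlt]) _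
  rcases le_or_gt ((1 - Smax) / 4) (1 - Zeps ε s) with hcase | hcase
  · have hb : (1 - Zeps ε s) ^ (2 - lam) ≤ ((1 - Smax) / 4) ^ (2 - lam) :=
      Real.rpow_le_rpow_of_nonpos (by linarith) hcase (by linarith)
    nlinarith [mul_nonneg h2p hE]
  · have hin : SD ≤ s - (1 - Zeps ε s) := by
      by_contra hc
      push_neg at hc
      have hs1 : s < Smax + (1 - Smax) / 4 := by linarith
      rcases le_or_gt s 0 with hle | hpos
      · have hZ : Z s = 0 := by
          unfold Z; rw [max_eq_right hle, min_eq_left (by norm_num)]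
        have hzz : Zeps ε s = ε := by unfold Zeps; rw [hZ]; ring
        rw [hzz] at hcase; linarith
      · have hZ : Z s = s := by
          unfold Z; rw [max_eq_left hpos.le, min_eq_left (by linarith)]
        have hzz : Zeps ε s = (1 - 2 * ε) * s + ε := by unfold Zeps; rw [hZ]
        rw [hzz] at hcase
        nlinarith [mul_nonneg (by linarith : (0:ℝ) ≤ 1/2 - 2 * ε)
          (by linarith : (0:ℝ) ≤ 1 - s)]
    have hlow := lowerB (γ := γ) hε hε4 hTM hlam hin
    have hpow : (2:ℝ) ^ (lam + 1) * 2 ^ (-lam - 1) = 1 := by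
      rw [← Real.rpow_add (by norm_num : (0:ℝ) < 2)]; norm_num
    calc (1 - Zeps ε s) ^ (2 - lam)
        = 2 ^ (lam + 1) * (2 ^ (-lam - 1) * (1 - Zeps ε s) ^ (2 - lam)) := by
          rw [← mul_assoc, hpow, one_mul]
      _ ≤ 2 ^ (lam + 1) * Eeps γ lam TM ε SD s := mul_le_mul_of_nonneg_left hlow h2p
      _ ≤ _ := le_add_of_nonneg_right hbnonneg

end Aux

/-- Proposition 7.1 of the paper (estimates (AE.5)–(AE.6), quantitative version):
a uniform bound on the integrated regularized entropy yields uniform bounds on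
`∫ Z_ε(S)^{2−γ}` and `∫ (1−Z_ε(S))^{2−λ}`. -/
theorem entropy_bound_controls_singular_moments
    (γ lam TM : ℝ) (hγ : 2 < γ) (hlam : 2 < lam) (hTM : 1 < TM)
    (Smin Smax : ℝ) (h0 : 0 < Smin) (h1 : Smin ≤ Smax) (h2 : Smax < 1)
    (Ω : Type*) [MeasurableSpace Ω] (μ : Measure Ω) [IsFiniteMeasure μ]
    (C0 : ℝ) (hC0 : 0 < C0) :
    ∃ C' > (0:ℝ),
      ∀ ε ∈ Set.Ioc (0:ℝ) (1/4), ∀ SD ∈ Set.Icc Smin Smax, ∀ S : Ω → ℝ,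
        Measurable S →
        Integrable (fun x => Eeps γ lam TM ε SD (S x)) μ →
        (∫ x, Eeps γ lam TM ε SD (S x) ∂μ) ≤ C0 →
        (∫⁻ x, ENNReal.ofReal (Zeps ε (S x) ^ (2 - γ)) ∂μ) ≤ ENNReal.ofReal C' ∧
        (∫⁻ x, ENNReal.ofReal ((1 - Zeps ε (S x)) ^ (2 - lam)) ∂μ) ≤
          ENNReal.ofReal C' := by
  have hSminlt : Smin < 1 := lt_of_le_of_lt h1 h2
  set a : ℝ := 2 ^ (γ + 1) + 2 ^ (lam + 1) with ha_def
  set b : ℝ := (Smin / 4) ^ (2 - γ) + ((1 - Smax) / 4) ^ (2 - lam) with hb_def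
  have haγ : (0:ℝ) < 2 ^ (γ + 1) := Real.rpow_pos_of_pos two_pos _
  have haL : (0:ℝ) < 2 ^ (lam + 1) := Real.rpow_pos_of_pos two_pos _
  have ha : 0 < a := add_pos haγ haL
  have hb1 : (0:ℝ) ≤ (Smin / 4) ^ (2 - γ) := Real.rpow_nonneg (by positivity) _
  have hb2 : (0:ℝ) ≤ ((1 - Smax) / 4) ^ (2 - lam) :=
    Real.rpow_nonneg (x := (1 - Smax) / 4) (by linarith) _
  have hb : 0 ≤ b := add_nonneg hb1 hb2
  have hμ : (0:ℝ) ≤ (μ Set.univ).toReal := ENNReal.toReal_nonneg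
  refine ⟨a * C0 + b * (μ Set.univ).toReal, by nlinarith, ?_⟩
  rintro ε ⟨hε, hε4⟩ SD ⟨hSD1, hSD2⟩ S hS hInt hle
  have hTM0 : (0:ℝ) ≤ TM := by linarith
  have hTM1 : (1:ℝ) ≤ TM := hTM.le
  have hEnonneg : ∀ x, 0 ≤ Eeps γ lam TM ε SD (S x) := fun x =>
    Eeps_nonneg hε hε4 hTM0 SD (S x)
  have hlint : (∫⁻ x, ENNReal.ofReal (Eeps γ lam TM ε SD (S x)) ∂μ) ≤ ENNReal.ofReal C0 := by
    rw [← ofReal_integral_eq_lintegral_ofReal hInt (ae_of_all _ hEnonneg)]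
    exact ENNReal.ofReal_le_ofReal hle
  have main : ∀ f : Ω → ℝ,
      (∀ x, f x ≤ a * Eeps γ lam TM ε SD (S x) + b) →
      (∫⁻ x, ENNReal.ofReal (f x) ∂μ)
        ≤ ENNReal.ofReal (a * C0 + b * (μ Set.univ).toReal) := by
    intro f hf
    calc ∫⁻ x, ENNReal.ofReal (f x) ∂μ
        ≤ ∫⁻ x, (ENNReal.ofReal a * ENNReal.ofReal (Eeps γ lam TM ε SD (S x))
            + ENNReal.ofReal b) ∂μ := by
          refine lintegral_mono fun x => ?_
          calc ENNReal.ofReal (f x)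
              ≤ ENNReal.ofReal (a * Eeps γ lam TM ε SD (S x) + b) :=
                ENNReal.ofReal_le_ofReal (hf x)
            _ ≤ ENNReal.ofReal (a * Eeps γ lam TM ε SD (S x)) + ENNReal.ofReal b :=
                ENNReal.ofReal_add_le
            _ = ENNReal.ofReal a * ENNReal.ofReal (Eeps γ lam TM ε SD (S x))
                + ENNReal.ofReal b := by rw [ENNReal.ofReal_mul ha.le]
      _ = ENNReal.ofReal a * (∫⁻ x, ENNReal.ofReal (Eeps γ lam TM ε SD (S x)) ∂μ)
            + ENNReal.ofReal b * μ Set.univ := by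
          rw [lintegral_add_right _ measurable_const, lintegral_const,
            lintegral_const_mul' _ _ ENNReal.ofReal_ne_top]
      _ ≤ ENNReal.ofReal a * ENNReal.ofReal C0 + ENNReal.ofReal b * μ Set.univ :=
          add_le_add (mul_le_mul_right hlint _) le_rfl
      _ = ENNReal.ofReal (a * C0 + b * (μ Set.univ).toReal) := by
          rw [ENNReal.ofReal_add (mul_nonneg ha.le hC0.le) (mul_nonneg hb hμ),
            ENNReal.ofReal_mul ha.le, ENNReal.ofReal_mul hb,
            ENNReal.ofReal_toReal (measure_ne_top μ Set.univ)]
  constructor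
  · refine main _ fun x => ?_
    have hA := pointwiseA (lam := lam) (TM := TM) hε hε4 hTM0 hγ h0 hSminlt hSD1 (S x)
    have hE := hEnonneg x
    simp only [ha_def, hb_def]
    nlinarith [mul_nonneg haL.le hE]
  · refine main _ fun x => ?_
    have hB := pointwiseB (γ := γ) hε hε4 hTM1 hlam (lt_of_lt_of_le h0 h1) h2 hSD2 (S x)
    have hE := hEnonneg x
    simp only [ha_def, hb_def]
    nlinarith [mul_nonneg haγ.le hE]
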